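/- Suppose every loss f_i is twice continuously differentiable and there exists β_max > 0 such that ∇²f_i(θ) ⪯ β_max·I for all i ∈ [N] and all θ ∈ ℝ^d. Then for every t < 0 and every θ ∈ ℝ^d, the Hessian of the t-tilted loss satisfies ∇²_{θθ} R̃(t;θ) ⪯ β_max·I; equivalently, the largest eigenvalue of ∇²_{θθ} R̃(t;θ) is at most β_max, so R̃(t;·) is β_max-smooth for negative tilts. -/

import Mathlib

open Real Finset

section Aux
open InnerProductSpace
variable {E : Type*} [NormedAddCommGroup E] [InnerProductSpace ℝ E] [CompleteSpace E]

variable {E : Type*} [NormedAddCommGroup E] [InnerProductSpace ℝ E] [CompleteSpace E]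

noncomputable def dualCLM (E : Type*) [NormedAddCommGroup E] [InnerProductSpace ℝ E]
    [CompleteSpace E] : StrongDual ℝ E →L[ℝ] E :=
  { toFun := fun ℓ => (toDual ℝ E).symm ℓ
    map_add' := fun ℓ₁ ℓ₂ => by simp
    map_smul' := fun c ℓ => by simp
    cont := (toDual ℝ E).symm.continuous }

lemma grad_quad (F : E → ℝ) (hF : ContDiff ℝ 2 F) (x v : E) :
    (inner ℝ v (fderiv ℝ (fun y => gradient F y) x v) : ℝ) = fderiv ℝ (fderiv ℝ F) x v v := by
  have hd : DifferentiableAt ℝ (fderiv ℝ F) x :=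
    ((hF.fderiv_right (m := 1) (by norm_num)).differentiable one_ne_zero) x
  have h1 : HasFDerivAt (fun y => gradient F y)
      ((dualCLM E).comp (fderiv ℝ (fderiv ℝ F) x)) x :=
    (dualCLM E).hasFDerivAt.comp x hd.hasFDerivAt
  rw [h1.fderiv]
  show (inner ℝ v ((toDual ℝ E).symm (fderiv ℝ (fderiv ℝ F) x v)) : ℝ) = _
  rw [real_inner_comm, toDual_symm_apply]

omit [CompleteSpace E] in
lemma line_hasDerivAt (θ v : E) (s : ℝ) : HasDerivAt (fun u : ℝ => θ + u • v) v s := by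
  simpa using ((hasDerivAt_id s).smul_const v).const_add θ

omit [CompleteSpace E] in
lemma dir_first (F : E → ℝ) (hF : ContDiff ℝ 2 F) (θ v : E) (s : ℝ) :
    HasDerivAt (fun u : ℝ => F (θ + u • v)) (fderiv ℝ F (θ + s • v) v) s :=
  ((hF.differentiable (by norm_num) _).hasFDerivAt).comp_hasDerivAt s (line_hasDerivAt θ v s)

omit [CompleteSpace E] in
lemma dir_second (F : E → ℝ) (hF : ContDiff ℝ 2 F) (θ v : E) (s : ℝ) :
    HasDerivAt (fun u : ℝ => fderiv ℝ F (θ + u • v) v)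
      (fderiv ℝ (fderiv ℝ F) (θ + s • v) v v) s := by
  have hd : DifferentiableAt ℝ (fderiv ℝ F) (θ + s • v) :=
    ((hF.fderiv_right (m := 1) (by norm_num)).differentiable one_ne_zero) _
  have h1 : HasDerivAt (fun u : ℝ => fderiv ℝ F (θ + u • v))
      (fderiv ℝ (fderiv ℝ F) (θ + s • v) v) s :=
    hd.hasFDerivAt.comp_hasDerivAt s (line_hasDerivAt θ v s)
  simpa using h1.clm_apply (hasDerivAt_const s v)

end Aux

set_option maxHeartbeats 1000000

/-- The `t`-tilted empirical loss: for `t ≠ 0`,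
`R̃(t;θ) = (1/t) · log((1/N) · Σᵢ exp(t · fᵢ(θ)))`, and `R̃(0;θ) = (1/N) · Σᵢ fᵢ(θ)`. -/
noncomputable def tiltedLoss {d N : ℕ} (f : Fin N → EuclideanSpace ℝ (Fin d) → ℝ) (t : ℝ)
    (θ : EuclideanSpace ℝ (Fin d)) : ℝ :=
  if t = 0 then (1 / (N : ℝ)) * ∑ i, f i θ
  else (1 / t) * Real.log ((1 / (N : ℝ)) * ∑ i, Real.exp (t * f i θ))

/-- **Smoothness of the tilted loss for negative tilts.** Suppose every `fᵢ` is twice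
continuously differentiable with `∇²fᵢ(θ) ⪯ βmax·I` for all `i` and `θ` (expressed as the
quadratic-form upper bound `⟨v, ∇²fᵢ(θ) v⟩ ≤ βmax·‖v‖²`), where `βmax > 0`. Then for every
`t < 0` and every `θ`, the Hessian of the tilted loss satisfies `∇² R̃(t;θ) ⪯ βmax·I`, i.e.
its largest eigenvalue is at most `βmax`, so `R̃(t;·)` is `βmax`-smooth for negative tilts. -/
theorem tilted_smooth_neg_tilt {d N : ℕ} (hN : 0 < N)
    (f : Fin N → EuclideanSpace ℝ (Fin d) → ℝ)
    (hf : ∀ i, ContDiff ℝ 2 (f i))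
    (βmax : ℝ) (hβ : 0 < βmax)
    (hess_ub : ∀ (i : Fin N) (θ v : EuclideanSpace ℝ (Fin d)),
      (inner ℝ v (fderiv ℝ (fun x => gradient (f i) x) θ v) : ℝ) ≤ βmax * ‖v‖ ^ 2)
    (t : ℝ) (ht : t < 0) :
    ∀ θ v : EuclideanSpace ℝ (Fin d),
      (inner ℝ v (fderiv ℝ (fun x => gradient (tiltedLoss f t) x) θ v) : ℝ) ≤ βmax * ‖v‖ ^ 2 := by
  intro θ v
  have ht' : t ≠ 0 := ne_of_lt ht
  have hNne : (N : ℝ) ≠ 0 := Nat.cast_ne_zero.mpr hN.ne'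
  set C : ℝ := βmax * ‖v‖ ^ 2 with hC
  -- the tilted loss is C²
  have Req : tiltedLoss f t =
      fun x => (1 / t) * Real.log ((1 / (N : ℝ)) * ∑ i, Real.exp (t * f i x)) := by
    funext x; simp [tiltedLoss, ht']
  have hsum : ContDiff ℝ 2 (fun x : EuclideanSpace ℝ (Fin d) =>
      (1 / (N : ℝ)) * ∑ i, Real.exp (t * f i x)) :=
    contDiff_const.mul (ContDiff.sum fun i _ => (contDiff_const.mul (hf i)).exp)
  have hpos : ∀ x : EuclideanSpace ℝ (Fin d),
      0 < (1 / (N : ℝ)) * ∑ i, Real.exp (t * f i x) := by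
    intro x
    apply mul_pos (by positivity)
    exact Finset.sum_pos (fun i _ => Real.exp_pos _)
      (Finset.univ_nonempty_iff.mpr ⟨⟨0, hN⟩⟩)
  have hR : ContDiff ℝ 2 (tiltedLoss f t) := by
    rw [Req]
    exact contDiff_const.mul (hsum.log fun x => (hpos x).ne')
  -- 1-D reduction along the line θ + s • v
  set φ : Fin N → ℝ → ℝ := fun i s => f i (θ + s • v) with hφdef
  set a : Fin N → ℝ → ℝ := fun i s => fderiv ℝ (f i) (θ + s • v) v with hadef
  set b : Fin N → ℝ → ℝ := fun i s => fderiv ℝ (fderiv ℝ (f i)) (θ + s • v) v v with hbdef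
  set e : Fin N → ℝ → ℝ := fun i s => Real.exp (t * φ i s) with hedef
  set S : ℝ → ℝ := fun s => ∑ i, e i s with hSdef
  set A : ℝ → ℝ := fun s => ∑ i, a i s * e i s with hAdef
  have hφ : ∀ i s, HasDerivAt (φ i) (a i s) s := fun i s => dir_first (f i) (hf i) θ v s
  have ha : ∀ i s, HasDerivAt (a i) (b i s) s := fun i s => dir_second (f i) (hf i) θ v s
  have hb : ∀ i s, b i s ≤ C := by
    intro i s
    rw [hbdef]
    simpa using (grad_quad (f i) (hf i) (θ + s • v) v) ▸ hess_ub i (θ + s • v) v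
  have he : ∀ i s, HasDerivAt (e i) (e i s * (t * a i s)) s :=
    fun i s => ((hφ i s).const_mul t).exp
  have hS : ∀ s, HasDerivAt S (∑ i, e i s * (t * a i s)) s :=
    fun s => HasDerivAt.fun_sum fun i _ => he i s
  have hSpos : ∀ s, 0 < S s := fun s =>
    Finset.sum_pos (fun i _ => Real.exp_pos _) (Finset.univ_nonempty_iff.mpr ⟨⟨0, hN⟩⟩)
  have hSsum : ∀ s, (∑ i, e i s * (t * a i s)) = t * A s := by
    intro s; rw [hAdef, Finset.mul_sum]; exact Finset.sum_congr rfl fun i _ => by ring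
  have hA : ∀ s, HasDerivAt A (∑ i, (b i s * e i s + a i s * (e i s * (t * a i s)))) s :=
    fun s => HasDerivAt.fun_sum fun i _ => (ha i s).mul (he i s)
  -- identify the first directional derivative of the tilted loss with A/S
  have hg2 : ∀ s, HasDerivAt (fun u : ℝ => tiltedLoss f t (θ + u • v)) (A s / S s) s := by
    intro s
    have h0 : HasDerivAt (fun u : ℝ => (1 / (N : ℝ)) * S u) ((1 / (N : ℝ)) * (t * A s)) s := by
      simpa [hSsum s] using (hS s).const_mul (1 / (N : ℝ))
    have hne : (1 / (N : ℝ)) * S s ≠ 0 := by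
      have := hSpos s; positivity
    have h1 := (h0.log hne).const_mul (1 / t)
    have hSne : S s ≠ 0 := (hSpos s).ne'
    have heq : (1 / t) * ((1 / (N : ℝ)) * (t * A s) / ((1 / (N : ℝ)) * S s)) = A s / S s := by
      rw [mul_div_mul_left _ _ (by positivity : (1 / (N : ℝ)) ≠ 0), ← mul_div_assoc,
        ← mul_assoc, one_div_mul_cancel ht', one_mul]
    rw [heq] at h1
    have : (fun u : ℝ => tiltedLoss f t (θ + u • v)) =
        fun u => (1 / t) * Real.log ((1 / (N : ℝ)) * S u) := by
      funext u; rw [Req]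
    rw [this]
    exact h1
  have Deq : ∀ s, fderiv ℝ (tiltedLoss f t) (θ + s • v) v = A s / S s := fun s =>
    (dir_first (tiltedLoss f t) hR θ v s).unique (hg2 s)
  -- rewrite the goal as a 1-D second derivative
  rw [grad_quad (tiltedLoss f t) hR θ v]
  have hQ : HasDerivAt (fun s : ℝ => A s / S s)
      (fderiv ℝ (fderiv ℝ (tiltedLoss f t)) θ v v) 0 := by
    have h := dir_second (tiltedLoss f t) hR θ v 0
    simp only [zero_smul, add_zero] at h
    have : (fun u : ℝ => fderiv ℝ (tiltedLoss f t) (θ + u • v) v) =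
        fun s : ℝ => A s / S s := funext Deq
    rwa [this] at h
  have hQ' : HasDerivAt (fun s : ℝ => A s / S s)
      (((∑ i, (b i 0 * e i 0 + a i 0 * (e i 0 * (t * a i 0)))) * S 0 - A 0 * (t * A 0)) /
        S 0 ^ 2) 0 := by
    have := (hA 0).div (hS 0) (hSpos 0).ne'
    rwa [hSsum 0] at this
  have hval := hQ.unique hQ'
  rw [hval]
  -- now the arithmetic bound
  set P : ℝ := ∑ i, (a i 0) ^ 2 * e i 0 with hP
  have hepos : ∀ i, 0 < e i 0 := fun i => Real.exp_pos _
  have hA'le : (∑ i, (b i 0 * e i 0 + a i 0 * (e i 0 * (t * a i 0)))) ≤ C * S 0 + t * P := by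
    have : (C * S 0 + t * P) = ∑ i, (C * e i 0 + t * ((a i 0) ^ 2 * e i 0)) := by
      rw [hSdef, hP, Finset.mul_sum, Finset.mul_sum, ← Finset.sum_add_distrib]
    rw [this]
    apply Finset.sum_le_sum
    intro i _
    have h1 := hb i 0
    have h2 := (hepos i).le
    nlinarith [hepos i]
  have hCS : A 0 ^ 2 ≤ P * S 0 := by
    have h := Finset.sum_mul_sq_le_sq_mul_sq Finset.univ
      (fun i => a i 0 * Real.sqrt (e i 0)) (fun i => Real.sqrt (e i 0))
    have e1 : (∑ i, (a i 0 * Real.sqrt (e i 0)) * Real.sqrt (e i 0)) = A 0 := by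
      rw [hAdef]
      exact Finset.sum_congr rfl fun i _ => by
        rw [mul_assoc, Real.mul_self_sqrt (hepos i).le]
    have e2 : (∑ i, (a i 0 * Real.sqrt (e i 0)) ^ 2) = P := by
      rw [hP]
      exact Finset.sum_congr rfl fun i _ => by
        rw [mul_pow, Real.sq_sqrt (hepos i).le]
    have e3 : (∑ i, (Real.sqrt (e i 0)) ^ 2) = S 0 := by
      rw [hSdef]
      exact Finset.sum_congr rfl fun i _ => Real.sq_sqrt (hepos i).le
    rw [e1, e2, e3] at h
    exact h
  have hS0 : 0 < S 0 := hSpos 0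
  rw [div_le_iff₀ (by positivity)]
  nlinarith [mul_le_mul_of_nonneg_right hA'le hS0.le, mul_nonneg (neg_nonneg.mpr ht.le)
    (sub_nonneg.mpr hCS)]
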